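/- P_K(c) = Σ over worlds W with O_W ⊨ c of P_B(W); that is, the infimum over all models p of the knowledge base K = (P_B, 𝕊) of P_p(c) equals the total P_B-probability of the worlds W whose induced ontology O_W entails c. -/

import Mathlib

open scoped ENNReal

namespace BL

variable {I A C V : Type*}

/-- A world `W` satisfies the context `κ` if it agrees with `κ` wherever it is defined. -/
def SatCtx (W : V → Bool) (κ : V → Option Bool) : Prop :=
  ∀ v b, κ v = some b → W v = b

/-- The ontology induced by the world `W` from the `V`-ontology `𝕊`. -/
def OW (𝕊 : Finset (A × (V → Option Bool))) (W : V → Bool) : Set A :=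
  {α | ∃ κ, (α, κ) ∈ 𝕊 ∧ SatCtx W κ}

/-- `i` is a model of the ontology `O`. -/
def IsOntModel (satA : I → A → Prop) (O : Set A) (i : I) : Prop :=
  ∀ α ∈ O, satA i α

/-- The ontology `O` entails the consequence `c`. -/
def Entails (satA : I → A → Prop) (satC : I → C → Prop) (O : Set A) (c : C) : Prop :=
  ∀ i : I, IsOntModel satA O i → satC i c

/-- A probabilistic interpretation `p` (a finitely supported PMF on pairs of an
interpretation and a world) is a model of the knowledge base `(PB, 𝕊)`. -/
def IsKBModel (satA : I → A → Prop) (PB : PMF (V → Bool))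
    (𝕊 : Finset (A × (V → Option Bool))) (p : PMF (I × (V → Bool))) : Prop :=
  p.support.Finite ∧
    (∀ iW ∈ p.support, IsOntModel satA (OW 𝕊 iW.2) iW.1) ∧
    ∀ W : V → Bool, ∑' i : I, p (i, W) = PB W

/-- `P_p(c)`: the probability of the consequence `c` w.r.t. `p`. -/
noncomputable def Pp (satC : I → C → Prop) (p : PMF (I × (V → Bool))) (c : C) : ℝ≥0∞ :=
  ∑' iW : I × (V → Bool), {x : I × (V → Bool) | satC x.1 c}.indicator (⇑p) iW

/-- `P_K(c)`: the infimum of `P_p(c)` over all models `p` of the knowledge base. -/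
noncomputable def PK (satA : I → A → Prop) (satC : I → C → Prop) (PB : PMF (V → Bool))
    (𝕊 : Finset (A × (V → Option Bool))) (c : C) : ℝ≥0∞ :=
  sInf {x : ℝ≥0∞ | ∃ p : PMF (I × (V → Bool)), IsKBModel satA PB 𝕊 p ∧ x = Pp satC p c}

/-- `P_K(c) = Σ_{O_W ⊨ c} P_B(W)`. -/
theorem probabilistic_entailment [Fintype V]
    (satA : I → A → Prop) (satC : I → C → Prop)
    (PB : PMF (V → Bool)) (𝕊 : Finset (A × (V → Option Bool))) (c : C)
    (hmod : ∀ W : V → Bool, ∃ i : I, IsOntModel satA (OW 𝕊 W) i) :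
    PK satA satC PB 𝕊 c
      = ∑' W : V → Bool,
          {W : V → Bool | Entails satA satC (OW 𝕊 W) c}.indicator (⇑PB) W := by
  classical
  -- choose, for each world, a model of its ontology witnessing satisfaction iff entailment
  have hpick : ∀ W : V → Bool, ∃ i : I, IsOntModel satA (OW 𝕊 W) i ∧
      (satC i c ↔ Entails satA satC (OW 𝕊 W) c) := by
    intro W
    by_cases h : Entails satA satC (OW 𝕊 W) c
    · obtain ⟨i, hi⟩ := hmod W
      exact ⟨i, hi, iff_of_true (h i hi) h⟩
    · have h' := h
      simp only [Entails, not_forall] at h'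
      obtain ⟨i, hi, hic⟩ := h'
      exact ⟨i, hi, iff_of_false hic h⟩
  choose pick hpick1 hpick2 using hpick
  set f : (V → Bool) → I × (V → Bool) := fun W => (pick W, W) with hfdef
  have hfinj : Function.Injective f := fun a b h => congrArg Prod.snd h
  set p : PMF (I × (V → Bool)) := PB.map f with hpdef
  have hpapp : ∀ i W, p (i, W) = if i = pick W then PB W else 0 := by
    intro i W
    rw [hpdef, PMF.map_apply]
    rw [tsum_eq_single W]
    · by_cases h : i = pick W
      · simp [hfdef, h]
      · simp [hfdef, Prod.ext_iff, h]
    · intro w hw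
      simp [hfdef, Prod.ext_iff, Ne.symm hw]
  have hmarg : ∀ W : V → Bool, ∑' i : I, p (i, W) = PB W := by
    intro W
    simp only [hpapp]
    exact tsum_ite_eq (pick W) (fun _ => PB W)
  have hsupp : p.support = f '' PB.support := PMF.support_map f PB
  have hKB : IsKBModel satA PB 𝕊 p := by
    refine ⟨?_, ?_, hmarg⟩
    · rw [hsupp]; exact (Set.toFinite _).image f
    · intro iW hiW
      rw [hsupp] at hiW
      obtain ⟨W, _, rfl⟩ := hiW
      exact hpick1 W
  have hPp : Pp satC p c
      = ∑' W : V → Bool,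
          {W : V → Bool | Entails satA satC (OW 𝕊 W) c}.indicator (⇑PB) W := by
    rw [Pp]
    rw [← hfinj.tsum_eq (f := {x : I × (V → Bool) | satC x.1 c}.indicator (⇑p))]
    · refine tsum_congr fun W => ?_
      by_cases h : Entails satA satC (OW 𝕊 W) c
      · have hs : satC (pick W) c := (hpick2 W).2 h
        rw [Set.indicator_of_mem
              (show f W ∈ {x : I × (V → Bool) | satC x.1 c} from hs),
            Set.indicator_of_mem
              (show W ∈ {W | Entails satA satC (OW 𝕊 W) c} from h)]
        rw [show f W = (pick W, W) from rfl, hpapp]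
        simp
      · have hs : ¬ satC (pick W) c := fun hc => h ((hpick2 W).1 hc)
        rw [Set.indicator_of_notMem
              (show f W ∉ {x : I × (V → Bool) | satC x.1 c} from hs),
            Set.indicator_of_notMem
              (show W ∉ {W | Entails satA satC (OW 𝕊 W) c} from h)]
    · intro iW hiW
      have : iW ∈ p.support := by
        have := Set.indicator_apply_ne_zero.mp hiW
        exact this.2
      rw [hsupp] at this
      obtain ⟨W, _, rfl⟩ := this
      exact ⟨W, rfl⟩
  apply le_antisymm
  · exact sInf_le ⟨p, hKB, hPp.symm⟩
  · refine le_sInf ?_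
    rintro x ⟨q, ⟨_, hqsupp, hqmarg⟩, rfl⟩
    calc ∑' W : V → Bool,
          {W : V → Bool | Entails satA satC (OW 𝕊 W) c}.indicator (⇑PB) W
        = ∑' W : V → Bool, ∑' i : I,
            (if Entails satA satC (OW 𝕊 W) c then q (i, W) else 0) := by
          refine tsum_congr fun W => ?_
          by_cases h : Entails satA satC (OW 𝕊 W) c
          · rw [Set.indicator_of_mem
                  (show W ∈ {W | Entails satA satC (OW 𝕊 W) c} from h)]
            simp only [if_pos h]
            exact (hqmarg W).symm
          · rw [Set.indicator_of_notMem
                  (show W ∉ {W | Entails satA satC (OW 𝕊 W) c} from h)]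
            simp [h]
      _ ≤ ∑' W : V → Bool, ∑' i : I,
            {x : I × (V → Bool) | satC x.1 c}.indicator (⇑q) (i, W) := by
          refine Summable.tsum_le_tsum (fun W => Summable.tsum_le_tsum (fun i => ?_) ENNReal.summable
            ENNReal.summable) ENNReal.summable ENNReal.summable
          by_cases h : Entails satA satC (OW 𝕊 W) c
          · rw [if_pos h]
            by_cases hz : q (i, W) = 0
            · simp [hz]
            · have hmem : (i, W) ∈ q.support := hz
              have : satC i c := h i (hqsupp (i, W) hmem)
              exact le_of_eq (Set.indicator_of_mem
                (show (i, W) ∈ {x : I × (V → Bool) | satC x.1 c} from this) ⇑q).symm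
          · simp [h]
      _ = Pp satC q c := by
          rw [Pp, ENNReal.tsum_prod', ENNReal.tsum_comm]

end BL
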